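/- Let K be a finite connected simple graph with V vertices and E edges, and let t be an automorphism of K with t∘t = id and with no fixed vertices (tv ≠ v for every vertex v). Let I be the number of edges e of K with t(e) = e (where t acts on edges via its action on vertices). Then the number of t-symmetric 1-cycles of K equals 2^{(E-V+2)/2} if I = 0, and equals 2^{(E-V+I)/2} if I > 0. -/

import Mathlib

open scoped symmDiff

open Finset

/-- char-2 sum over symmetric difference. -/
lemma sum_symmDiff_char2 {α : Type*} [DecidableEq α] (A B : Finset α) (f : α → ZMod 2) :
    ∑ x ∈ A ∆ B, f x = ∑ x ∈ A, f x + ∑ x ∈ B, f x := by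
  have h1 : ∑ x ∈ A ∪ B, f x + ∑ x ∈ A ∩ B, f x = ∑ x ∈ A, f x + ∑ x ∈ B, f x :=
    Finset.sum_union_inter
  have h2 : A ∆ B = (A ∪ B) \ (A ∩ B) := by
    ext x; simp [Finset.mem_symmDiff, Finset.mem_sdiff]; tauto
  have h3 : ∑ x ∈ (A ∪ B) \ (A ∩ B), f x + ∑ x ∈ A ∩ B, f x = ∑ x ∈ A ∪ B, f x :=
    Finset.sum_sdiff (Finset.inter_subset_union)
  have hc : ∀ x : ZMod 2, x + x = 0 := by decide
  calc ∑ x ∈ A ∆ B, f x = ∑ x ∈ (A ∪ B) \ (A ∩ B), f x := by rw [h2]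
    _ = ∑ x ∈ (A ∪ B) \ (A ∩ B), f x + (∑ x ∈ A ∩ B, f x + ∑ x ∈ A ∩ B, f x) := by
        rw [hc]; exact (add_zero _).symm
    _ = (∑ x ∈ A ∪ B, f x) + ∑ x ∈ A ∩ B, f x := by rw [← add_assoc, h3]
    _ = _ := by rw [← h1]

/-- transversal for a free involution on a finset -/
lemma exists_transversal {α : Type*} [DecidableEq α] (g : α → α) (hg : ∀ x, g (g x) = x) :
    ∀ (s : Finset α), (∀ x ∈ s, g x ∈ s) → (∀ x ∈ s, g x ≠ x) →
    ∃ r : Finset α, r ⊆ s ∧ (∀ x ∈ s, (x ∈ r ↔ g x ∉ r)) ∧ 2 * r.card = s.card := by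
  intro s
  induction s using Finset.strongInduction with
  | _ s ih =>
    intro hmap hfr
    rcases s.eq_empty_or_nonempty with rfl | ⟨a, ha⟩
    · exact ⟨∅, by simp⟩
    · have hga : g a ∈ s := hmap a ha
      have hgaa : g a ≠ a := hfr a ha
      set s' := s \ {a, g a} with hs'
      have hss : s' ⊂ s := by
        apply Finset.sdiff_ssubset _ (by simp)
        intro x hx; simp at hx; rcases hx with rfl | rfl <;> assumption
      have hmap' : ∀ x ∈ s', g x ∈ s' := by
        intro x hx
        simp only [hs', Finset.mem_sdiff, Finset.mem_insert, Finset.mem_singleton, not_or] at hx ⊢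
        exact ⟨hmap x hx.1, fun h => hx.2.2 (by rw [← h, hg]),
          fun h => hx.2.1 (by have := congrArg g h; rwa [hg, hg] at this)⟩
      have hfr' : ∀ x ∈ s', g x ≠ x := fun x hx => hfr x (Finset.mem_sdiff.mp hx).1
      obtain ⟨r', hr'sub, hr'prop, hr'card⟩ := ih s' hss hmap' hfr'
      have har' : a ∉ r' := fun h => by
        have := hr'sub h; simp [hs'] at this
      have hgar' : g a ∉ r' := fun h => by
        have := hr'sub h; simp [hs'] at this
      refine ⟨insert a r', ?_, ?_, ?_⟩
      · intro x hx; rcases Finset.mem_insert.mp hx with rfl | hx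
        · exact ha
        · exact (Finset.mem_sdiff.mp (hr'sub hx)).1
      · intro x hx
        have hmem_a : a ∈ insert a r' := Finset.mem_insert_self a r'
        have hmem_ga : g a ∉ insert a r' := by
          rw [Finset.mem_insert]; push_neg; exact ⟨hgaa, hgar'⟩
        by_cases hxa : x = a
        · subst hxa
          simp [hmem_a, hmem_ga]
        · by_cases hxga : x = g a
          · subst hxga
            rw [hg]
            simp [hmem_a, hmem_ga]
          · have hxs' : x ∈ s' := by simp [hs', hx, hxa, hxga]
            have hgxa : g x ≠ a := by
              intro h; apply hxga; have := congrArg g h; rwa [hg] at this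
            rw [Finset.mem_insert, Finset.mem_insert]
            simp only [hxa, false_or, hgxa, false_or]
            exact hr'prop x hxs'
      · rw [Finset.card_insert_of_notMem har']
        have hcards' : s'.card = s.card - 2 := by
          rw [hs', Finset.card_sdiff_of_subset (by intro x hx; simp at hx; rcases hx with rfl | rfl <;> assumption)]
          simp [Finset.card_insert_of_notMem, hgaa.symm]
        have h2 : 2 ≤ s.card := by
          have : ({a, g a} : Finset α) ⊆ s := by
            intro x hx; simp at hx; rcases hx with rfl | rfl <;> assumption
          calc 2 = ({a, g a} : Finset α).card := by simp [hgaa.symm]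
            _ ≤ s.card := Finset.card_le_card this
        omega

/-- number of even-cardinality subsets of a nonempty finset -/
lemma card_even_powerset {α : Type*} [DecidableEq α] (R : Finset α) (hR : R.Nonempty) :
    (R.powerset.filter (fun S => Even S.card)).card = 2 ^ (R.card - 1) := by
  obtain ⟨r0, hr0⟩ := hR
  rw [← Finset.card_erase_of_mem hr0, ← Finset.card_powerset]
  apply Finset.card_bij (fun S _ => S.erase r0)
  · intro S hS
    rw [Finset.mem_filter, Finset.mem_powerset] at hS
    rw [Finset.mem_powerset]
    exact Finset.erase_subset_erase r0 hS.1
  · intro S hS T hT hST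
    rw [Finset.mem_filter, Finset.mem_powerset] at hS hT
    by_cases h1 : r0 ∈ S <;> by_cases h2 : r0 ∈ T
    · rw [← Finset.insert_erase h1, ← Finset.insert_erase h2, hST]
    · -- parity contradiction
      exfalso
      have : S = insert r0 T := by
        rw [← Finset.insert_erase h1, hST, Finset.erase_eq_of_notMem h2]
      rw [this, Finset.card_insert_of_notMem h2] at hS
      exact (Nat.even_add_one.mp hS.2) hT.2
    · exfalso
      have : T = insert r0 S := by
        rw [← Finset.insert_erase h2, ← hST, Finset.erase_eq_of_notMem h1]
      rw [this, Finset.card_insert_of_notMem h1] at hT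
      exact (Nat.even_add_one.mp hT.2) hS.2
    · rw [← Finset.erase_eq_of_notMem h1, ← Finset.erase_eq_of_notMem h2, hST]
  · intro T hT
    rw [Finset.mem_powerset] at hT
    by_cases hev : Even T.card
    · refine ⟨T, ?_, ?_⟩
      · rw [Finset.mem_filter, Finset.mem_powerset]
        exact ⟨hT.trans (Finset.erase_subset r0 R), hev⟩
      · rw [Finset.erase_eq_of_notMem (fun h => (Finset.mem_erase.mp (hT h)).1 rfl)]
    · refine ⟨insert r0 T, ?_, ?_⟩
      · rw [Finset.mem_filter, Finset.mem_powerset]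
        have hr0T : r0 ∉ T := fun h => (Finset.mem_erase.mp (hT h)).1 rfl
        constructor
        · exact Finset.insert_subset hr0 (hT.trans (Finset.erase_subset r0 R))
        · rw [Finset.card_insert_of_notMem hr0T]
          exact Nat.even_add_one.mpr hev
      · rw [Finset.erase_insert (fun h => (Finset.mem_erase.mp (hT h)).1 rfl)]

/-- a sum of evenly many generators, all of whose pairwise sums lie in J, lies in J -/
lemma even_sum_mem {α M : Type*} [DecidableEq α] [AddCommMonoid M] (J : Set M)
    (h0 : (0 : M) ∈ J) (hadd : ∀ a ∈ J, ∀ b ∈ J, a + b ∈ J) (g : α → M)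
    (hpair : ∀ u v : α, g u + g v ∈ J) :
    ∀ S : Finset α, Even S.card → ∑ v ∈ S, g v ∈ J := by
  intro S
  induction S using Finset.strongInduction with
  | _ S ih =>
    intro hev
    rcases S.eq_empty_or_nonempty with rfl | ⟨u, hu⟩
    · simpa using h0
    · have h2 : 2 ≤ S.card := by
        rcases hev with ⟨k, hk⟩
        have : 0 < S.card := Finset.card_pos.mpr ⟨u, hu⟩
        omega
      obtain ⟨v, hv, hvu⟩ : ∃ v ∈ S.erase u, True := by
        have : (S.erase u).Nonempty := by
          rw [← Finset.card_pos, Finset.card_erase_of_mem hu]; omega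
        exact ⟨this.choose, this.choose_spec, trivial⟩
      have hvS : v ∈ S := Finset.mem_of_mem_erase hv
      have hvu : v ≠ u := Finset.ne_of_mem_erase hv
      have hsplit : S = insert u (insert v (S.erase u |>.erase v)) := by
        rw [Finset.insert_erase hv, Finset.insert_erase hu]
      have hrest : ∑ w ∈ (S.erase u |>.erase v), g w ∈ J := by
        apply ih
        · apply Finset.ssubset_of_ssubset_of_subset (Finset.erase_ssubset hv)
          exact Finset.erase_subset u S
        · rw [Finset.card_erase_of_mem hv, Finset.card_erase_of_mem hu]
          rcases hev with ⟨k, hk⟩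
          exact ⟨k - 1, by omega⟩
      rw [hsplit, Finset.sum_insert (by simp [hvu.symm]),
        Finset.sum_insert (by simp), ← add_assoc]
      exact hadd _ (hpair u v) _ hrest

set_option linter.unusedSectionVars false

section OneCycleAux
variable {V : Type*} [Fintype V] [DecidableEq V]

/-- mod-2 boundary of an edge set -/
def oc_phi (C : Finset (Sym2 V)) : V → ZMod 2 := fun v => ∑ e ∈ C, if v ∈ e then 1 else 0

lemma oc_phi_eq_card (C : Finset (Sym2 V)) (v : V) :
    oc_phi C v = ((C.filter (fun e => v ∈ e)).card : ZMod 2) := by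
  simp [oc_phi, Finset.sum_boole]

lemma oc_phi_symmDiff (A B : Finset (Sym2 V)) :
    oc_phi (A ∆ B) = oc_phi A + oc_phi B := by
  funext v
  exact sum_symmDiff_char2 A B _

lemma sym2_map_invol (f : V → V) (hf : ∀ v, f (f v) = v) (e : Sym2 V) :
    Sym2.map f (Sym2.map f e) = e := by
  induction e with
  | _ a b => simp [hf]

lemma mem_sym2_map_invol (f : V → V) (hf : ∀ v, f (f v) = v) (v : V) (e : Sym2 V) :
    f v ∈ Sym2.map f e ↔ v ∈ e := by
  rw [Sym2.mem_map]
  constructor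
  · rintro ⟨a, ha, hav⟩
    have h : a = v := by
      have h2 := congrArg f hav; rwa [hf, hf] at h2
    rwa [h] at ha
  · intro hv; exact ⟨v, hv, rfl⟩

lemma ker_mul_image (Ω : Finset (Finset (Sym2 V)))
    (hΔ : ∀ A ∈ Ω, ∀ B ∈ Ω, A ∆ B ∈ Ω) :
    (Ω.filter (fun C => oc_phi C = 0)).card * (Ω.image oc_phi).card = Ω.card := by
  have hfib := Finset.card_eq_sum_card_fiberwise
    (f := oc_phi) (s := Ω) (t := Ω.image oc_phi) (fun C hC => Finset.mem_image_of_mem _ hC)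
  have hconst : ∀ g ∈ Ω.image oc_phi,
      (Ω.filter (fun C => oc_phi C = g)).card = (Ω.filter (fun C => oc_phi C = 0)).card := by
    intro g hg
    obtain ⟨D, hD, hDg⟩ := Finset.mem_image.mp hg
    have key : ∀ {u : V → ZMod 2}, u + u = 0 := by
      intro u; funext v
      have : ∀ x : ZMod 2, x + x = 0 := by decide
      exact this (u v)
    apply Finset.card_nbij' (i := (· ∆ D)) (j := (· ∆ D))
    · intro C hC
      rw [Finset.mem_coe, Finset.mem_filter] at hC ⊢
      refine ⟨hΔ C hC.1 D hD, ?_⟩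
      rw [oc_phi_symmDiff, hC.2, hDg, key]
    · intro C hC
      rw [Finset.mem_coe, Finset.mem_filter] at hC ⊢
      refine ⟨hΔ C hC.1 D hD, ?_⟩
      rw [oc_phi_symmDiff, hC.2, hDg, zero_add]
    · intro C _; exact symmDiff_symmDiff_cancel_right D C
    · intro C _; exact symmDiff_symmDiff_cancel_right D C
  rw [hfib, Finset.sum_congr rfl hconst, Finset.sum_const, smul_eq_mul, mul_comm]

end OneCycleAux

section OmegaCard
variable {V : Type*} [Fintype V] [DecidableEq V]

lemma omega_card_aux (E : Finset (Sym2 V)) (f : V → V) (hf : ∀ v, f (f v) = v)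
    (hedge : ∀ e ∈ E, Sym2.map f e ∈ E) :
    ∃ p : ℕ, 2 * p + (E.filter (fun e => Sym2.map f e = e)).card = E.card ∧
      ((E.powerset).filter (fun C => C.image (Sym2.map f) = C)).card
        = 2 ^ ((E.filter (fun e => Sym2.map f e = e)).card + p) := by
  set τ : Sym2 V → Sym2 V := Sym2.map f with hτ
  have hτi : ∀ e, τ (τ e) = e := sym2_map_invol f hf
  set Fx := E.filter (fun e => τ e = e) with hFx
  set P := E.filter (fun e => ¬ τ e = e) with hP
  have hPmap : ∀ e ∈ P, τ e ∈ P := by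
    intro e he
    rw [hP, Finset.mem_filter] at he ⊢
    exact ⟨hedge e he.1, fun h => he.2 (by rw [← hτi e, h, h])⟩
  have hPfree : ∀ e ∈ P, τ e ≠ e := fun e he => (Finset.mem_filter.mp he).2
  obtain ⟨Rp, hRpsub, hRpprop, hRpcard⟩ := exists_transversal τ hτi P hPmap hPfree
  have hcards : Fx.card + P.card = E.card :=
    Finset.card_filter_add_card_filter_not (p := fun e => τ e = e)
  have hdisj : Disjoint Fx Rp := by
    rw [Finset.disjoint_left]
    intro e heFx heRp
    exact (Finset.mem_filter.mp (hRpsub heRp)).2 (Finset.mem_filter.mp heFx).2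
  have hFxE : Fx ⊆ E := Finset.filter_subset _ _
  have hPE : P ⊆ E := Finset.filter_subset _ _
  refine ⟨Rp.card, by omega, ?_⟩
  have hcard2 : ((E.powerset).filter (fun C => C.image τ = C)).card
      = (Fx ∪ Rp).powerset.card := by
    apply Finset.card_nbij' (i := fun C => C ∩ (Fx ∪ Rp)) (j := fun S => S ∪ S.image τ)
    · intro C _
      rw [Finset.mem_coe, Finset.mem_powerset]
      exact Finset.inter_subset_right
    · intro S hS
      rw [Finset.mem_coe, Finset.mem_powerset] at hS
      have hSE : S ⊆ E := hS.trans (by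
        intro e he
        rcases Finset.mem_union.mp he with h | h
        exacts [hFxE h, hPE (hRpsub h)])
      rw [Finset.mem_coe, Finset.mem_filter, Finset.mem_powerset]
      constructor
      · apply Finset.union_subset hSE
        intro e he
        obtain ⟨a, haS, rfl⟩ := Finset.mem_image.mp he
        exact hedge a (hSE haS)
      · rw [Finset.image_union]
        have h2 : (S.image τ).image τ = S := by
          rw [Finset.image_image]
          have hid : (τ ∘ τ) = id := funext hτi
          rw [hid, Finset.image_id]
        rw [h2, Finset.union_comm]
    · intro C hC
      rw [Finset.mem_coe, Finset.mem_filter, Finset.mem_powerset] at hC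
      obtain ⟨hCE, hCτ⟩ := hC
      ext e
      simp only [Finset.mem_union, Finset.mem_inter, Finset.mem_image]
      constructor
      · rintro (⟨heC, _⟩ | ⟨a, ⟨haC, _⟩, rfl⟩)
        · exact heC
        · rw [← hCτ]; exact Finset.mem_image_of_mem τ haC
      · intro heC
        have heE := hCE heC
        by_cases hfix : τ e = e
        · exact Or.inl ⟨heC, Finset.mem_union.mp
            (Finset.mem_union_left _ (Finset.mem_filter.mpr ⟨heE, hfix⟩))⟩
        · have heP : e ∈ P := Finset.mem_filter.mpr ⟨heE, hfix⟩
          by_cases heRp : e ∈ Rp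
          · exact Or.inl ⟨heC, Or.inr heRp⟩
          · have hτeRp : τ e ∈ Rp := by
              by_contra h
              exact heRp ((hRpprop e heP).mpr h)
            have hτeC : τ e ∈ C := by
              rw [← hCτ]; exact Finset.mem_image_of_mem τ heC
            exact Or.inr ⟨τ e, ⟨hτeC, Or.inr hτeRp⟩, hτi e⟩
    · intro S hS
      rw [Finset.mem_coe, Finset.mem_powerset] at hS
      ext e
      simp only [Finset.mem_inter, Finset.mem_union, Finset.mem_image]
      constructor
      · rintro ⟨(heS | ⟨a, haS, rfl⟩), hmem⟩
        · exact heS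
        · rcases hmem with hFx' | hRp'
          · have h1 : τ (τ a) = τ a := (Finset.mem_filter.mp hFx').2
            rw [hτi] at h1
            rwa [← h1]
          · rcases Finset.mem_union.mp (hS haS) with haFx | haRp
            · have h1 : τ a = a := (Finset.mem_filter.mp haFx).2
              rwa [h1]
            · exact absurd hRp' ((hRpprop a (hRpsub haRp)).mp haRp)
      · intro heS
        exact ⟨Or.inl heS, Finset.mem_union.mp (hS heS)⟩
  rw [hcard2, Finset.card_powerset, Finset.card_union_of_disjoint hdisj]
end OmegaCard

section SymFun
variable {V : Type*} [Fintype V] [DecidableEq V]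

lemma symfun_ji (g : V → V) (hg : ∀ v, g (g v) = v) (R : Finset V)
    (hR : ∀ x : V, x ∈ R ↔ g x ∉ R) (S : Finset V) (hS : S ⊆ R) :
    R.filter (fun v => (if v ∈ S ∨ g v ∈ S then (1 : ZMod 2) else 0) = 1) = S := by
  ext v
  rw [Finset.mem_filter]
  constructor
  · rintro ⟨hvR, hone⟩
    have hcond : v ∈ S ∨ g v ∈ S := by
      by_contra h
      rw [if_neg h] at hone
      exact (by decide : (0 : ZMod 2) ≠ 1) hone
    rcases hcond with h | h
    · exact h
    · exact absurd (hS h) ((hR v).mp hvR)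
  · intro hvS
    exact ⟨hS hvS, by rw [if_pos (Or.inl hvS)]⟩

lemma symfun_ij (g : V → V) (hg : ∀ v, g (g v) = v) (R : Finset V)
    (hR : ∀ x : V, x ∈ R ↔ g x ∉ R) (F : V → ZMod 2) (hF : ∀ v, F (g v) = F v) :
    (fun v => if v ∈ R.filter (fun w => F w = 1) ∨ g v ∈ R.filter (fun w => F w = 1)
      then (1 : ZMod 2) else 0) = F := by
  have hz : ∀ x : ZMod 2, x = 0 ∨ x = 1 := by decide
  funext v
  by_cases hvR : v ∈ R
  · have hgv : g v ∉ R := (hR v).mp hvR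
    simp only [Finset.mem_filter, hvR, true_and, hgv, false_and, or_false]
    rcases hz (F v) with h | h <;> simp [h]
  · have hgv : g v ∈ R := not_not.mp (fun h => hvR ((hR v).mpr h))
    simp only [Finset.mem_filter, hvR, false_and, hgv, true_and, false_or, hF v]
    rcases hz (F v) with h | h <;> simp [h]

lemma symfun_sum (g : V → V) (R : Finset V) (F : V → ZMod 2) :
    (∑ v ∈ R, F v = 0) ↔ Even (R.filter (fun v => F v = 1)).card := by
  have hz : ∀ x : ZMod 2, x = 0 ∨ x = 1 := by decide
  have h1 : ∑ v ∈ R, F v = ((R.filter (fun v => F v = 1)).card : ZMod 2) := by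
    rw [← Finset.sum_boole]
    apply Finset.sum_congr rfl
    intro v _
    rcases hz (F v) with h | h <;> simp [h]
  rw [h1, ZMod.natCast_eq_zero_iff]
  exact ⟨fun h => (even_iff_two_dvd).mpr h, fun h => (even_iff_two_dvd).mp h⟩

lemma symfun_card (g : V → V) (hg : ∀ v, g (g v) = v) (R : Finset V)
    (hR : ∀ x : V, x ∈ R ↔ g x ∉ R) :
    (Finset.univ.filter (fun F : V → ZMod 2 => ∀ v, F (g v) = F v)).card = 2 ^ R.card := by
  rw [← Finset.card_powerset R]
  apply Finset.card_nbij' (i := fun F => R.filter (fun v => F v = 1))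
    (j := fun S => fun v => if v ∈ S ∨ g v ∈ S then (1 : ZMod 2) else 0)
  · intro F _
    rw [Finset.mem_coe, Finset.mem_powerset]
    exact Finset.filter_subset _ _
  · intro S hS
    rw [Finset.mem_coe, Finset.mem_filter]
    refine ⟨Finset.mem_univ _, fun v => ?_⟩
    simp only [hg v]
    congr 1
    exact propext or_comm
  · intro F hF
    exact symfun_ij g hg R hR F (Finset.mem_filter.mp hF).2
  · intro S hS
    exact symfun_ji g hg R hR S (Finset.mem_powerset.mp hS)

lemma symfun_card_even (g : V → V) (hg : ∀ v, g (g v) = v) (R : Finset V)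
    (hR : ∀ x : V, x ∈ R ↔ g x ∉ R) (hne : R.Nonempty) :
    (Finset.univ.filter (fun F : V → ZMod 2 =>
      (∀ v, F (g v) = F v) ∧ ∑ v ∈ R, F v = 0)).card = 2 ^ (R.card - 1) := by
  rw [← card_even_powerset R hne]
  apply Finset.card_nbij' (i := fun F => R.filter (fun v => F v = 1))
    (j := fun S => fun v => if v ∈ S ∨ g v ∈ S then (1 : ZMod 2) else 0)
  · intro F hF
    rw [Finset.mem_coe, Finset.mem_filter] at hF
    rw [Finset.mem_coe, Finset.mem_filter, Finset.mem_powerset]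
    exact ⟨Finset.filter_subset _ _, (symfun_sum g R F).mp hF.2.2⟩
  · intro S hS
    rw [Finset.mem_coe, Finset.mem_filter, Finset.mem_powerset] at hS
    rw [Finset.mem_coe, Finset.mem_filter]
    have hsym : ∀ v, (if g v ∈ S ∨ g (g v) ∈ S then (1 : ZMod 2) else 0)
        = (if v ∈ S ∨ g v ∈ S then (1 : ZMod 2) else 0) := by
      intro v; simp only [hg v]; congr 1; exact propext or_comm
    refine ⟨Finset.mem_univ _, hsym, ?_⟩
    rw [symfun_sum g R]
    rw [symfun_ji g hg R hR S hS.1]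
    exact hS.2
  · intro F hF
    rw [Finset.mem_coe, Finset.mem_filter] at hF
    exact symfun_ij g hg R hR F hF.2.1
  · intro S hS
    rw [Finset.mem_coe, Finset.mem_filter, Finset.mem_powerset] at hS
    exact symfun_ji g hg R hR S hS.1
end SymFun

lemma ind_pair_swap {α : Type*} [DecidableEq α] (v a b c d : α) (hab : a ≠ b)
    (hcd : c ≠ d) (hac : a ≠ c) (had : a ≠ d) (hbc : b ≠ c) (hbd : b ≠ d) :
    (if v = a ∨ v = b then (1 : ZMod 2) else 0) + (if v = c ∨ v = d then 1 else 0)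
      = (if v = a ∨ v = c then 1 else 0) + (if v = b ∨ v = d then 1 else 0) := by
  by_cases h1 : v = a <;> by_cases h2 : v = b <;> by_cases h3 : v = c <;>
    by_cases h4 : v = d <;> simp_all

lemma ind_mem_pair {α : Type*} [DecidableEq α] (v x y : α) (hxy : x ≠ y) :
    (if v ∈ s(x, y) then (1 : ZMod 2) else 0)
      = (if v = x then (1 : ZMod 2) else 0) + (if v = y then 1 else 0) := by
  by_cases hvx : v = x <;> by_cases hvy : v = y <;> simp_all [Sym2.mem_iff]

lemma pow_cancel_aux {k a b : ℕ} (h : k * 2 ^ a = 2 ^ b) (hk : 0 < k) :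
    k = 2 ^ (b - a) ∧ a ≤ b := by
  have hdvd : 2 ^ a ∣ 2 ^ b := ⟨k, by rw [← h]; ring⟩
  have hab : a ≤ b := (Nat.pow_dvd_pow_iff_le_right one_lt_two).mp hdvd
  refine ⟨?_, hab⟩
  apply Nat.eq_of_mul_eq_mul_right (show 0 < 2 ^ a by positivity)
  rw [h, ← pow_add, Nat.sub_add_cancel hab]

/-- A 1-cycle in a simple graph `G` is a set `C` of edges of `G` such that every
vertex is incident to an even number of edges of `C`. -/
def IsOneCycle {V : Type*} [DecidableEq V] (G : SimpleGraph V) (C : Finset (Sym2 V)) : Prop :=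
  (∀ e ∈ C, e ∈ G.edgeSet) ∧ ∀ v : V, Even (C.filter (fun e => v ∈ e)).card

/-- Let `K` be a finite connected simple graph with `V` vertices and `E` edges, and
`t` a fixed-point-free involutive automorphism of `K`. If `I` is the number of edges
fixed by `t`, then the number of `t`-symmetric 1-cycles of `K` equals
`2 ^ ((E - V + 2)/2)` if `I = 0` and `2 ^ ((E - V + I)/2)` if `I > 0`. -/
theorem card_symmetric_oneCycles {V : Type*} [Fintype V] [DecidableEq V]
    (G : SimpleGraph V) [DecidableRel G.Adj] (hconn : G.Connected)
    (t : G ≃g G) (hinv : ∀ v : V, t (t v) = v) (hfree : ∀ v : V, t v ≠ v)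
    (I : ℕ) (hI : I = (G.edgeFinset.filter (fun e => Sym2.map ⇑t e = e)).card) :
    (I = 0 →
      Nat.card {C : Finset (Sym2 V) // IsOneCycle G C ∧ C.image (Sym2.map ⇑t) = C}
        = 2 ^ ((G.edgeFinset.card + 2 - Fintype.card V) / 2)) ∧
    (0 < I →
      Nat.card {C : Finset (Sym2 V) // IsOneCycle G C ∧ C.image (Sym2.map ⇑t) = C}
        = 2 ^ ((G.edgeFinset.card + I - Fintype.card V) / 2)) := by
  classical
  have hτi : ∀ e : Sym2 V, Sym2.map ⇑t (Sym2.map ⇑t e) = e := sym2_map_invol ⇑t hinv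
  have hfinj : Function.Injective (⇑t : V → V) := fun a b hab => by
    have h := congrArg (⇑t) hab; rwa [hinv, hinv] at h
  have hself : ∀ F : V → ZMod 2, F + F = 0 := by
    intro F; funext v
    have : ∀ x : ZMod 2, x + x = 0 := by decide
    exact this (F v)
  have hz : ∀ x : ZMod 2, x = 0 ∨ x = 1 := by decide
  have hedge : ∀ e ∈ G.edgeFinset, Sym2.map ⇑t e ∈ G.edgeFinset := by
    intro e he
    induction e with
    | _ a b =>
      rw [SimpleGraph.mem_edgeFinset, SimpleGraph.mem_edgeSet] at he
      rw [Sym2.map_pair_eq, SimpleGraph.mem_edgeFinset, SimpleGraph.mem_edgeSet]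
      exact t.map_adj_iff.mpr he
  set Ω := (G.edgeFinset.powerset).filter (fun C => C.image (Sym2.map ⇑t) = C) with hΩdef
  set K0 := Ω.filter (fun C => oc_phi C = 0) with hK0def
  -- step A : the subtype count is K0.card
  have hcardsub : Nat.card {C : Finset (Sym2 V) //
      IsOneCycle G C ∧ C.image (Sym2.map ⇑t) = C} = K0.card := by
    have hphizero : ∀ C : Finset (Sym2 V),
        oc_phi C = 0 ↔ ∀ v, Even (C.filter (fun e => v ∈ e)).card := by
      intro C
      rw [funext_iff]
      apply forall_congr'
      intro v
      rw [oc_phi_eq_card, Pi.zero_apply, ZMod.natCast_eq_zero_iff]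
      exact even_iff_two_dvd.symm
    have hiff : ∀ C : Finset (Sym2 V),
        (IsOneCycle G C ∧ C.image (Sym2.map ⇑t) = C) ↔ C ∈ K0 := by
      intro C
      rw [hK0def, Finset.mem_filter, hΩdef, Finset.mem_filter, Finset.mem_powerset]
      constructor
      · rintro ⟨⟨h1, h2⟩, h3⟩
        exact ⟨⟨fun e he => SimpleGraph.mem_edgeFinset.mpr (h1 e he), h3⟩, (hphizero C).mpr h2⟩
      · rintro ⟨⟨h1, h3⟩, h2⟩
        exact ⟨⟨fun e he => SimpleGraph.mem_edgeFinset.mp (h1 he), (hphizero C).mp h2⟩, h3⟩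
    rw [Nat.card_congr (Equiv.subtypeEquivRight hiff), Nat.card_eq_fintype_card,
      Fintype.card_coe]
  -- Ω is closed under symmetric difference
  have hΔ : ∀ A ∈ Ω, ∀ B ∈ Ω, A ∆ B ∈ Ω := by
    intro A hA B hB
    rw [hΩdef, Finset.mem_filter, Finset.mem_powerset] at hA hB ⊢
    constructor
    · intro x hx
      rw [Finset.mem_symmDiff] at hx
      rcases hx with ⟨h, -⟩ | ⟨h, -⟩
      · exact hA.1 h
      · exact hB.1 h
    · rw [Finset.image_symmDiff A B (Sym2.map.injective hfinj), hA.2, hB.2]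
  have hΩempty : ∅ ∈ Ω := by
    rw [hΩdef, Finset.mem_filter, Finset.mem_powerset]
    exact ⟨Finset.empty_subset _, by simp⟩
  have hphiempty : oc_phi (∅ : Finset (Sym2 V)) = 0 := by
    funext v; simp [oc_phi]
  have hK0pos : 0 < K0.card := by
    apply Finset.card_pos.mpr
    exact ⟨∅, by rw [hK0def, Finset.mem_filter]; exact ⟨hΩempty, hphiempty⟩⟩
  have hker : K0.card * (Ω.image oc_phi).card = Ω.card := ker_mul_image Ω hΔ
  obtain ⟨p, hp, hΩcard⟩ := omega_card_aux G.edgeFinset ⇑t hinv hedge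
  rw [← hI] at hp hΩcard
  rw [← hΩdef] at hΩcard
  -- vertex transversal
  obtain ⟨R, hRsub, hRprop, hRcard⟩ := exists_transversal (⇑t) hinv Finset.univ
    (fun x _ => Finset.mem_univ _) (fun v _ => hfree v)
  have hR : ∀ x : V, x ∈ R ↔ t x ∉ R := fun x => hRprop x (Finset.mem_univ x)
  rw [Finset.card_univ] at hRcard
  have hVpos : 0 < Fintype.card V := Fintype.card_pos_iff.mpr hconn.nonempty
  set J := Ω.image oc_phi with hJdef
  have h0J : (0 : V → ZMod 2) ∈ J := by
    rw [hJdef]; exact Finset.mem_image.mpr ⟨∅, hΩempty, hphiempty⟩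
  have haddJ : ∀ a ∈ J, ∀ b ∈ J, a + b ∈ J := by
    intro a ha b hb
    obtain ⟨A, hA, rfl⟩ := Finset.mem_image.mp ha
    obtain ⟨B, hB, rfl⟩ := Finset.mem_image.mp hb
    exact Finset.mem_image.mpr ⟨A ∆ B, hΔ A hA B hB, oc_phi_symmDiff A B⟩
  -- the indicator functions of vertex orbits
  set sfun : V → (V → ZMod 2) :=
    fun a v => if v = a ∨ v = t a then 1 else 0 with hsfundef
  have hsfun_t : ∀ a, sfun (t a) = sfun a := by
    intro a; funext v
    rw [hsfundef]
    simp only [hinv]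
    congr 1
    exact propext or_comm
  -- boundary of a symmetric edge set is a symmetric function
  have hphisym : ∀ C ∈ Ω, ∀ v, oc_phi C (t v) = oc_phi C v := by
    intro C hC v
    rw [hΩdef, Finset.mem_filter] at hC
    show (∑ e ∈ C, if t v ∈ e then (1 : ZMod 2) else 0)
      = ∑ e ∈ C, if v ∈ e then (1 : ZMod 2) else 0
    apply Finset.sum_nbij' (i := Sym2.map ⇑t) (j := Sym2.map ⇑t)
    · intro e he
      rw [← hC.2]; exact Finset.mem_image_of_mem _ he
    · intro e he
      rw [← hC.2]; exact Finset.mem_image_of_mem _ he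
    · intro e _; exact hτi e
    · intro e _; exact hτi e
    · intro e _
      congr 1
      rw [eq_iff_iff]
      have h2 := mem_sym2_map_invol ⇑t hinv (t v) e
      rw [hinv] at h2
      exact h2.symm
  -- adjacency generators
  have hab_mem : ∀ a b : V, G.Adj a b → sfun a + sfun b ∈ J := by
    intro a b hab
    by_cases hba : b = t a
    · subst hba
      rw [hsfun_t a, hself]
      exact h0J
    · have hne_ab : a ≠ b := hab.ne
      have h_tab : t a ≠ t b := fun h => hne_ab (hfinj h)
      have h_a_tb : a ≠ t b := fun h => hba (by rw [h, hinv])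
      have h_a_ta : a ≠ t a := fun h => hfree a h.symm
      have h_b_tb : b ≠ t b := fun h => hfree b h.symm
      have hee : Sym2.map ⇑t s(a, b) = s(t a, t b) := Sym2.map_pair_eq ⇑t a b
      have hene : s(a, b) ≠ Sym2.map ⇑t s(a, b) := by
        rw [hee]
        intro heq
        rcases Sym2.eq_iff.mp heq with ⟨h1, h2⟩ | ⟨h1, h2⟩
        · exact h_a_ta h1
        · exact h_a_tb h1
      have he1 : s(a, b) ∈ G.edgeFinset :=
        SimpleGraph.mem_edgeFinset.mpr (G.mem_edgeSet.mpr hab)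
      have hCmem : ({s(a, b), Sym2.map ⇑t s(a, b)} : Finset (Sym2 V)) ∈ Ω := by
        rw [hΩdef, Finset.mem_filter, Finset.mem_powerset]
        constructor
        · intro x hx
          rcases Finset.mem_insert.mp hx with rfl | hx
          · exact he1
          · rw [Finset.mem_singleton.mp hx]; exact hedge _ he1
        · rw [Finset.image_insert, Finset.image_singleton, hτi]
          exact Finset.pair_comm _ _
      refine Finset.mem_image.mpr ⟨_, hCmem, ?_⟩
      funext v
      have hsum : oc_phi {s(a, b), Sym2.map ⇑t s(a, b)} v
          = (if v ∈ s(a, b) then (1 : ZMod 2) else 0)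
            + (if v ∈ Sym2.map ⇑t s(a, b) then 1 else 0) :=
        Finset.sum_pair hene
      rw [Pi.add_apply, hsum, hee]
      show (if v ∈ s(a, b) then (1 : ZMod 2) else 0) + (if v ∈ s(t a, t b) then 1 else 0)
        = (if v = a ∨ v = t a then 1 else 0) + (if v = b ∨ v = t b then 1 else 0)
      simp only [Sym2.mem_iff]
      exact ind_pair_swap v a b (t a) (t b) hne_ab h_tab h_a_ta h_a_tb hba h_b_tb
  have hcancel : ∀ F G H : V → ZMod 2, (F + G) + (G + H) = F + H := by
    intro F G H; funext v
    have : ∀ x y z : ZMod 2, (x + y) + (y + z) = x + z := by decide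
    exact this (F v) (G v) (H v)
  have hreach : ∀ a b : V, sfun a + sfun b ∈ J := by
    intro a b
    obtain ⟨w⟩ := hconn.preconnected a b
    induction w with
    | nil => rw [hself]; exact h0J
    | cons h pw ih =>
      have h1 := hab_mem _ _ h
      have h2 := haddJ _ h1 _ ih
      rwa [hcancel] at h2
  -- decomposition of symmetric functions
  have hdecomp : ∀ F : V → ZMod 2, (∀ v, F (t v) = F v) →
      F = ∑ v ∈ R.filter (fun v => F v = 1), sfun v := by
    intro F hF
    funext w
    rw [Finset.sum_apply]
    have h1 : ∑ v ∈ R.filter (fun v => F v = 1), sfun v w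
        = (((R.filter (fun v => F v = 1)).filter (fun v => w = v ∨ w = t v)).card : ZMod 2) := by
      rw [← Finset.sum_boole]
    rw [h1]
    by_cases hwR : w ∈ R
    · have htwR : t w ∉ R := (hR w).mp hwR
      have hfilter : (R.filter (fun v => F v = 1)).filter (fun v => w = v ∨ w = t v)
          = (R.filter (fun v => F v = 1)).filter (fun v => v = w) := by
        apply Finset.filter_congr
        intro v hv
        rw [Finset.mem_filter] at hv
        constructor
        · rintro (h | h)
          · exact h.symm
          · exfalso
            have hv2 : v = t w := by rw [h, hinv]
            rw [hv2] at hv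
            exact htwR hv.1
        · intro h; exact Or.inl h.symm
      rw [hfilter, Finset.filter_eq']
      by_cases hFw : F w = 1
      · rw [if_pos (Finset.mem_filter.mpr ⟨hwR, hFw⟩)]
        simp [hFw]
      · have hF0 : F w = 0 := (hz (F w)).resolve_right hFw
        rw [if_neg (show w ∉ R.filter (fun v => F v = 1) from
          fun h => hFw (Finset.mem_filter.mp h).2)]
        simp [hF0]
    · have htwR : t w ∈ R := not_not.mp (fun h => hwR ((hR w).mpr h))
      have hFtw : F (t w) = F w := hF w
      have hfilter : (R.filter (fun v => F v = 1)).filter (fun v => w = v ∨ w = t v)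
          = (R.filter (fun v => F v = 1)).filter (fun v => v = t w) := by
        apply Finset.filter_congr
        intro v hv
        rw [Finset.mem_filter] at hv
        constructor
        · rintro (h | h)
          · exfalso; rw [← h] at hv; exact hwR hv.1
          · rw [h, hinv]
        · intro h
          refine Or.inr ?_
          rw [h, hinv]
      rw [hfilter, Finset.filter_eq']
      by_cases hFw : F w = 1
      · rw [if_pos (Finset.mem_filter.mpr ⟨htwR, by rw [hFtw]; exact hFw⟩)]
        simp [hFw]
      · have hF0 : F w = 0 := (hz (F w)).resolve_right hFw
        rw [if_neg (show t w ∉ R.filter (fun v => F v = 1) from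
          fun h => hFw (by rw [← hFtw]; exact (Finset.mem_filter.mp h).2))]
        simp [hF0]
  -- half-sum vanishing when there are no fixed edges
  have himI0 : I = 0 → ∀ C ∈ Ω, ∑ v ∈ R, oc_phi C v = 0 := by
    intro hI0 C hC
    have hcard0 : (G.edgeFinset.filter (fun e => Sym2.map ⇑t e = e)).card = 0 := by omega
    have hnofix : ∀ e ∈ G.edgeFinset, Sym2.map ⇑t e ≠ e := by
      intro e he hfix
      have hmem : e ∈ G.edgeFinset.filter (fun e => Sym2.map ⇑t e = e) :=
        Finset.mem_filter.mpr ⟨he, hfix⟩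
      rw [Finset.card_eq_zero.mp hcard0] at hmem
      exact absurd hmem (Finset.notMem_empty e)
    rw [hΩdef, Finset.mem_filter, Finset.mem_powerset] at hC
    obtain ⟨hCE, hCτ⟩ := hC
    have hCmap : ∀ e ∈ C, Sym2.map ⇑t e ∈ C := fun e he => by
      rw [← hCτ]; exact Finset.mem_image_of_mem _ he
    have hCfree : ∀ e ∈ C, Sym2.map ⇑t e ≠ e := fun e he => hnofix e (hCE he)
    obtain ⟨Rc, hRcsub, hRcprop, hRccard⟩ :=
      exists_transversal (Sym2.map ⇑t) hτi C hCmap hCfree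
    have hdisj : Disjoint Rc (Rc.image (Sym2.map ⇑t)) := by
      rw [Finset.disjoint_left]
      intro e he1 he2
      obtain ⟨y, hy, rfl⟩ := Finset.mem_image.mp he2
      exact (hRcprop y (hRcsub hy)).mp hy he1
    have hsplit : C = Rc ∪ Rc.image (Sym2.map ⇑t) := by
      apply Finset.Subset.antisymm
      · intro e he
        by_cases heRc : e ∈ Rc
        · exact Finset.mem_union_left _ heRc
        · apply Finset.mem_union_right
          have hτe : Sym2.map ⇑t e ∈ Rc := not_not.mp (fun h => heRc ((hRcprop e he).mpr h))
          exact Finset.mem_image.mpr ⟨_, hτe, hτi e⟩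
      · apply Finset.union_subset hRcsub
        intro e he
        obtain ⟨y, hy, rfl⟩ := Finset.mem_image.mp he
        exact hCmap y (hRcsub hy)
    have hswap : ∑ v ∈ R, oc_phi C v
        = ∑ e ∈ C, ∑ v ∈ R, (if v ∈ e then (1 : ZMod 2) else 0) := Finset.sum_comm
    rw [hswap, hsplit, Finset.sum_union hdisj,
      Finset.sum_image (fun x _ y _ h => Sym2.map.injective hfinj h), ← Finset.sum_add_distrib]
    apply Finset.sum_eq_zero
    intro e he
    revert he
    induction e using Sym2.inductionOn with
    | hf a b =>
      intro he
      have heC : s(a, b) ∈ C := hRcsub he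
      have heE : s(a, b) ∈ G.edgeFinset := hCE heC
      have hadj : G.Adj a b := G.mem_edgeSet.mp (SimpleGraph.mem_edgeFinset.mp heE)
      have hne : a ≠ b := hadj.ne
      have htne : t a ≠ t b := fun h => hne (hfinj h)
      rw [Sym2.map_pair_eq]
      have hsplit_ind : ∀ (x y : V), x ≠ y →
          (∑ v ∈ R, (if v ∈ s(x, y) then (1 : ZMod 2) else 0))
            = (if x ∈ R then (1 : ZMod 2) else 0) + (if y ∈ R then 1 else 0) := by
        intro x y hxy
        rw [Finset.sum_congr rfl (fun v _ => ind_mem_pair v x y hxy), Finset.sum_add_distrib,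
          Finset.sum_ite_eq' R x (fun _ => (1 : ZMod 2)),
          Finset.sum_ite_eq' R y (fun _ => (1 : ZMod 2))]
      rw [hsplit_ind a b hne, hsplit_ind (t a) (t b) htne]
      have hone : ∀ x : V,
          (if x ∈ R then (1 : ZMod 2) else 0) + (if t x ∈ R then 1 else 0) = 1 := by
        intro x
        by_cases hx : x ∈ R
        · have h2 := (hR x).mp hx
          simp [hx, h2]
        · have h2 : t x ∈ R := not_not.mp (fun h => hx ((hR x).mpr h))
          simp [hx, h2]
      calc (if a ∈ R then (1 : ZMod 2) else 0) + (if b ∈ R then 1 else 0)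
            + ((if t a ∈ R then 1 else 0) + (if t b ∈ R then 1 else 0))
          = ((if a ∈ R then (1 : ZMod 2) else 0) + (if t a ∈ R then 1 else 0))
            + ((if b ∈ R then 1 else 0) + (if t b ∈ R then 1 else 0)) := by ring
        _ = 1 + 1 := by rw [hone a, hone b]
        _ = 0 := by decide
  constructor
  · -- I = 0
    intro hI0
    have hJeq : J = Finset.univ.filter (fun F : V → ZMod 2 =>
        (∀ v, F (t v) = F v) ∧ ∑ v ∈ R, F v = 0) := by
      apply Finset.Subset.antisymm
      · intro F hF
        obtain ⟨C, hC, rfl⟩ := Finset.mem_image.mp hF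
        exact Finset.mem_filter.mpr ⟨Finset.mem_univ _, hphisym C hC, himI0 hI0 C hC⟩
      · intro F hF
        rw [Finset.mem_filter] at hF
        obtain ⟨-, hsym, hsum⟩ := hF
        have heven : Even ((R.filter (fun v => F v = 1)).card) :=
          (symfun_sum ⇑t R F).mp hsum
        rw [hdecomp F hsym]
        exact even_sum_mem {x | x ∈ J} h0J haddJ sfun hreach _ heven
    have hRne : R.Nonempty := by
      rw [← Finset.card_pos]; omega
    have hJcard : J.card = 2 ^ (R.card - 1) := by
      rw [hJeq]; exact symfun_card_even ⇑t hinv R hR hRne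
    rw [hJcard, hΩcard, hI0] at hker
    obtain ⟨hK0, hle⟩ := pow_cancel_aux hker hK0pos
    rw [hcardsub, hK0]
    congr 1
    omega
  · -- I > 0
    intro hIpos
    have hJeq : J = Finset.univ.filter (fun F : V → ZMod 2 => ∀ v, F (t v) = F v) := by
      have hpos2 : 0 < (G.edgeFinset.filter (fun e => Sym2.map ⇑t e = e)).card := by omega
      obtain ⟨e0, he0⟩ := Finset.card_pos.mp hpos2
      rw [Finset.mem_filter] at he0
      obtain ⟨he0E, he0fix⟩ := he0
      have hkey : ∃ a0 : V, sfun a0 ∈ J := by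
        revert he0E he0fix
        induction e0 using Sym2.inductionOn with
        | hf a b =>
          intro he0E he0fix
          have hfix2 := he0fix
          rw [Sym2.map_pair_eq, Sym2.eq_iff] at hfix2
          have hba : b = t a := by
            rcases hfix2 with ⟨h1, h2⟩ | ⟨h1, h2⟩
            · exact absurd h1 (hfree a)
            · exact h1.symm
          refine ⟨a, Finset.mem_image.mpr ⟨{s(a, b)}, ?_, ?_⟩⟩
          · rw [hΩdef, Finset.mem_filter, Finset.mem_powerset]
            refine ⟨Finset.singleton_subset_iff.mpr he0E, ?_⟩
            rw [Finset.image_singleton, he0fix]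
          · funext v
            show (∑ e ∈ ({s(a, b)} : Finset (Sym2 V)), if v ∈ e then (1 : ZMod 2) else 0)
              = sfun a v
            rw [Finset.sum_singleton]
            show (if v ∈ s(a, b) then (1 : ZMod 2) else 0)
              = if v = a ∨ v = t a then 1 else 0
            rw [hba]
            simp [Sym2.mem_iff]
      obtain ⟨a0, hs0⟩ := hkey
      have hs_all : ∀ v, sfun v ∈ J := by
        intro v
        have h1 := haddJ _ hs0 _ (hreach a0 v)
        have h2 : sfun a0 + (sfun a0 + sfun v) = sfun v := by
          funext w
          have h3 : ∀ x y : ZMod 2, x + (x + y) = y := by decide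
          exact h3 _ _
        rwa [h2] at h1
      apply Finset.Subset.antisymm
      · intro F hF
        obtain ⟨C, hC, rfl⟩ := Finset.mem_image.mp hF
        exact Finset.mem_filter.mpr ⟨Finset.mem_univ _, hphisym C hC⟩
      · intro F hF
        rw [Finset.mem_filter] at hF
        rw [hdecomp F hF.2]
        exact Finset.sum_induction sfun (fun x => x ∈ J)
          (fun a b ha hb => haddJ a ha b hb) h0J (fun v _ => hs_all v)
    have hJcard : J.card = 2 ^ R.card := by
      rw [hJeq]; exact symfun_card ⇑t hinv R hR
    rw [hJcard, hΩcard] at hker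
    obtain ⟨hK0, hle⟩ := pow_cancel_aux hker hK0pos
    rw [hcardsub, hK0]
    congr 1
    omega
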